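/- arXiv:1405.3856 — 2 statements merged into one kernel-verified Lean document; each statement's English description precedes it below -/
import Mathlib

section
/- Let λ > 0 and let α, β < 3/2. For all real s < r and x, y ∈ ℝ, one has ∫_s^r ∫_ℝ (r-ρ)^{-α} exp(-λ(x-w)²/(2(r-ρ))) · (ρ-s)^{-β} exp(-λ(w-y)²/(2(ρ-s))) dw dρ = (2π/λ)^{1/2} · B(3/2-α, 3/2-β) · (r-s)^{3/2-α-β} · exp(-λ(x-y)²/(2(r-s))), where B denotes the Beta function. -/
open MeasureTheory Real

/-- Gaussian convolution identity (completing the square). -/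
lemma gauss_conv (lam a b x y : ℝ) (hlam : 0 < lam) (ha : 0 < a) (hb : 0 < b) :
    ∫ w : ℝ, Real.exp (-lam * (x - w) ^ 2 / (2 * a)) * Real.exp (-lam * (w - y) ^ 2 / (2 * b)) =
      Real.sqrt (2 * Real.pi * a * b / (lam * (a + b))) *
        Real.exp (-lam * (x - y) ^ 2 / (2 * (a + b))) := by
  set k : ℝ := lam * (a + b) / (2 * (a * b)) with hk_def
  set m : ℝ := (b * x + a * y) / (a + b) with hm_def
  have hab : 0 < a + b := by linarith
  have hk : 0 < k := by positivity
  have key : ∀ w : ℝ,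
      Real.exp (-lam * (x - w) ^ 2 / (2 * a)) * Real.exp (-lam * (w - y) ^ 2 / (2 * b)) =
        Real.exp (-lam * (x - y) ^ 2 / (2 * (a + b))) * Real.exp (-k * (w - m) ^ 2) := by
    intro w
    rw [← Real.exp_add, ← Real.exp_add]
    congr 1
    rw [hk_def, hm_def]
    field_simp
    ring
  simp_rw [key]
  rw [integral_const_mul, integral_sub_right_eq_self (fun w => Real.exp (-k * w ^ 2)) m,
    integral_gaussian k]
  rw [mul_comm]
  congr 2
  rw [hk_def]
  field_simp

/-- Real Beta integral on `[0,1]`. -/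
lemma real_beta (p q : ℝ) (hp : 0 < p) (hq : 0 < q) :
    ∫ u in (0:ℝ)..1, u ^ (p - 1) * (1 - u) ^ (q - 1) =
      Real.Gamma p * Real.Gamma q / Real.Gamma (p + q) := by
  have h := Complex.Gamma_mul_Gamma_eq_betaIntegral (s := (p : ℂ)) (t := (q : ℂ))
    (by simpa using hp) (by simpa using hq)
  have hbeta : Complex.betaIntegral (p : ℂ) (q : ℂ) =
      ((∫ u in (0:ℝ)..1, u ^ (p - 1) * (1 - u) ^ (q - 1) : ℝ) : ℂ) := by
    rw [Complex.betaIntegral, ← intervalIntegral.integral_ofReal]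
    apply intervalIntegral.integral_congr
    intro u hu
    rw [Set.uIcc_of_le (by norm_num : (0:ℝ) ≤ 1)] at hu
    obtain ⟨hu0, hu1⟩ := hu
    push_cast
    rw [Complex.ofReal_cpow hu0 (p-1), Complex.ofReal_cpow (by linarith : (0:ℝ) ≤ 1 - u) (q-1)]
    push_cast
    ring
  rw [hbeta, ← Complex.ofReal_add, Complex.Gamma_ofReal, Complex.Gamma_ofReal,
    Complex.Gamma_ofReal, ← Complex.ofReal_mul, ← Complex.ofReal_mul] at h
  have h' := Complex.ofReal_inj.mp h
  have hG : Real.Gamma (p + q) ≠ 0 := (Real.Gamma_pos_of_pos (by linarith)).ne'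
  field_simp
  linarith [h']

/-- Beta integral on a general interval. -/
lemma beta_interval (p q s r : ℝ) (hp : 0 < p) (hq : 0 < q) (hsr : s < r) :
    ∫ ρ in s..r, (r - ρ) ^ (p - 1) * (ρ - s) ^ (q - 1) =
      Real.Gamma p * Real.Gamma q / Real.Gamma (p + q) * (r - s) ^ (p + q - 1) := by
  have hrs : 0 < r - s := sub_pos.2 hsr
  have hsub := intervalIntegral.integral_comp_mul_add
    (f := fun t => (r - t) ^ (p - 1) * (t - s) ^ (q - 1)) (a := 0) (b := 1)
    (c := r - s) hrs.ne' s
  rw [mul_zero, zero_add, mul_one, sub_add_cancel] at hsub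
  have hcong : ∀ u ∈ Set.uIcc (0:ℝ) 1,
      (fun u => (r - ((r - s) * u + s)) ^ (p - 1) * ((r - s) * u + s - s) ^ (q - 1)) u =
        (fun u => (r - s) ^ (p - 1) * (r - s) ^ (q - 1) *
          ((1 - u) ^ (p - 1) * u ^ (q - 1))) u := by
    intro u hu
    rw [Set.uIcc_of_le (by norm_num : (0:ℝ) ≤ 1)] at hu
    obtain ⟨hu0, hu1⟩ := hu
    simp only
    have e1 : r - ((r - s) * u + s) = (r - s) * (1 - u) := by ring
    have e2 : (r - s) * u + s - s = (r - s) * u := by ring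
    rw [e1, e2, Real.mul_rpow hrs.le (by linarith), Real.mul_rpow hrs.le hu0]
    ring
  rw [intervalIntegral.integral_congr hcong, intervalIntegral.integral_const_mul] at hsub
  have hb : ∫ u in (0:ℝ)..1, (1 - u) ^ (p - 1) * u ^ (q - 1) =
      Real.Gamma p * Real.Gamma q / Real.Gamma (p + q) := by
    have h2 := real_beta q p hq hp
    simp_rw [mul_comm (_ ^ (q - 1)) (_ ^ (p - 1))] at h2
    rw [h2, add_comm q p, mul_comm (Real.Gamma q)]
  rw [hb] at hsub
  rw [smul_eq_mul, inv_mul_eq_div, eq_div_iff hrs.ne'] at hsub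
  have hmain : (∫ ρ in s..r, (r - ρ) ^ (p - 1) * (ρ - s) ^ (q - 1)) =
      (r - s) ^ (1:ℝ) * (r - s) ^ (p - 1) * (r - s) ^ (q - 1) *
        (Real.Gamma p * Real.Gamma q / Real.Gamma (p + q)) := by
    rw [Real.rpow_one, ← hsub]
    ring
  rw [hmain, ← Real.rpow_add hrs, ← Real.rpow_add hrs,
    show (1:ℝ) + (p - 1) + (q - 1) = p + q - 1 from by ring]
  ring

theorem stmt4 (lam α β s r x y : ℝ) (hlam : 0 < lam) (hα : α < 3 / 2) (hβ : β < 3 / 2)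
    (hsr : s < r) :
    ∫ ρ in s..r, ∫ w : ℝ,
        (r - ρ) ^ (-α) * Real.exp (-lam * (x - w) ^ 2 / (2 * (r - ρ))) *
          ((ρ - s) ^ (-β) * Real.exp (-lam * (w - y) ^ 2 / (2 * (ρ - s)))) =
      Real.sqrt (2 * Real.pi / lam) *
        (Real.Gamma (3 / 2 - α) * Real.Gamma (3 / 2 - β) /
          Real.Gamma ((3 / 2 - α) + (3 / 2 - β))) *
        (r - s) ^ (3 / 2 - α - β) * Real.exp (-lam * (x - y) ^ 2 / (2 * (r - s))) := by
  have hrs : 0 < r - s := sub_pos.2 hsr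
  set p : ℝ := 3 / 2 - α with hp_def
  set q : ℝ := 3 / 2 - β with hq_def
  have hp : 0 < p := by rw [hp_def]; linarith
  have hq : 0 < q := by rw [hq_def]; linarith
  set C : ℝ := Real.exp (-lam * (x - y) ^ 2 / (2 * (r - s))) with hC_def
  set K : ℝ := Real.sqrt (2 * Real.pi / lam) / Real.sqrt (r - s) * C with hK_def
  have key : Set.EqOn
      (fun ρ => ∫ w : ℝ, (r - ρ) ^ (-α) * Real.exp (-lam * (x - w) ^ 2 / (2 * (r - ρ))) *
          ((ρ - s) ^ (-β) * Real.exp (-lam * (w - y) ^ 2 / (2 * (ρ - s)))))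
      (fun ρ => K * ((r - ρ) ^ (p - 1) * (ρ - s) ^ (q - 1))) (Set.Ioo s r) := by
    intro ρ hρ
    have ha : 0 < r - ρ := sub_pos.2 hρ.2
    have hb : 0 < ρ - s := sub_pos.2 hρ.1
    have hab : r - ρ + (ρ - s) = r - s := by ring
    simp only
    have rearr : ∀ w : ℝ, (r - ρ) ^ (-α) * Real.exp (-lam * (x - w) ^ 2 / (2 * (r - ρ))) *
        ((ρ - s) ^ (-β) * Real.exp (-lam * (w - y) ^ 2 / (2 * (ρ - s)))) =
        ((r - ρ) ^ (-α) * (ρ - s) ^ (-β)) *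
          (Real.exp (-lam * (x - w) ^ 2 / (2 * (r - ρ))) *
            Real.exp (-lam * (w - y) ^ 2 / (2 * (ρ - s)))) := fun w => by ring
    simp_rw [rearr]
    rw [integral_const_mul, gauss_conv lam (r - ρ) (ρ - s) x y hlam ha hb, hab]
    have hsq : Real.sqrt (2 * Real.pi * (r - ρ) * (ρ - s) / (lam * (r - s))) =
        Real.sqrt (2 * Real.pi / lam) / Real.sqrt (r - s) *
          ((r - ρ) ^ ((1:ℝ)/2) * (ρ - s) ^ ((1:ℝ)/2)) := by
      rw [show 2 * Real.pi * (r - ρ) * (ρ - s) / (lam * (r - s)) =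
          2 * Real.pi / lam * (r - ρ) * (ρ - s) / (r - s) from by field_simp]
      rw [Real.sqrt_div (by positivity) (r - s), Real.sqrt_mul (by positivity),
        Real.sqrt_mul (by positivity), Real.sqrt_eq_rpow (r - ρ), Real.sqrt_eq_rpow (ρ - s)]
      ring
    rw [hsq, hK_def, show p - 1 = -α + 1/2 from by rw [hp_def]; ring,
      show q - 1 = -β + 1/2 from by rw [hq_def]; ring,
      Real.rpow_add ha, Real.rpow_add hb, ← hC_def]
    ring
  rw [intervalIntegral.integral_of_le hsr.le, integral_Ioc_eq_integral_Ioo,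
    setIntegral_congr_fun measurableSet_Ioo key, integral_const_mul,
    ← integral_Ioc_eq_integral_Ioo, ← intervalIntegral.integral_of_le hsr.le,
    beta_interval p q s r hp hq hsr]
  rw [hK_def, Real.sqrt_eq_rpow (r - s),
    show p + q - 1 = p - β + 1/2 from by rw [hq_def]; ring,
    Real.rpow_add hrs]
  have hne : (r - s) ^ ((1:ℝ)/2) ≠ 0 := (Real.rpow_pos_of_pos hrs _).ne'
  field_simp
end

section
/- Let X and Y be Polish spaces and f : X → Y a continuous injective map. Then for every Borel set A ⊆ X, the image f(A) is a Borel subset of Y; in particular f is a Borel isomorphism onto its image. -/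
theorem stmt9 {X Y : Type*} [TopologicalSpace X] [PolishSpace X] [MeasurableSpace X]
    [BorelSpace X] [TopologicalSpace Y] [PolishSpace Y] [MeasurableSpace Y] [BorelSpace Y]
    (f : X → Y) (hf : Continuous f) (hinj : Function.Injective f) :
    (∀ A : Set X, MeasurableSet A → MeasurableSet (f '' A)) ∧ MeasurableEmbedding f := by
  have h := hf.measurableEmbedding hinj
  exact ⟨fun A hA => h.measurableSet_image.2 hA, h⟩
end
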